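/- Let X be a Banach space with a topological direct sum decomposition X = U ⊕ V, and let π : X → U be the projection onto U along V. Let U' ⊆ X be a closed subspace such that the restriction π|_{U'} : U' → U is a Fredholm operator. Then U' decomposes as U' = {x + Tx : x ∈ π(U')} ⊕ F, where F = ker(π|_{U'}) is finite dimensional and T : π(U') → V is a bounded linear operator. Consequently, U' is a complemented subspace of X. -/

import Mathlib

/-!
Statement 0 (Lemma on Fredholm projections and graphs):
Let `X` be a Banach space with topological direct sum `X = U ⊕ V`, realized by a
continuous idempotent `π` with range `U` and kernel `V`.  If `U' ⊆ X` is a closed subspace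
such that `π|_{U'} : U' → U` is Fredholm, then
`U' = {x + Tx : x ∈ π(U')} ⊕ F` with `F = ker (π|_{U'})` finite dimensional and
`T : π(U') → V` bounded; consequently `U'` is complemented (the range of a continuous
projection).
-/

/-- The restriction of the continuous linear map `q` to the subspace `S`, viewed as a map
into the range of `q`, is Fredholm: finite-dimensional kernel, closed image, and image of
finite codimension in `LinearMap.range q`. -/
def IsFredholmRestriction {X : Type*} [NormedAddCommGroup X] [NormedSpace ℝ X]
    (q : X →L[ℝ] X) (S : Submodule ℝ X) : Prop :=
  FiniteDimensional ℝ ↥(S ⊓ LinearMap.ker (q : X →ₗ[ℝ] X)) ∧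
    IsClosed ((S.map (q : X →ₗ[ℝ] X) : Submodule ℝ X) : Set X) ∧
    FiniteDimensional ℝ
      (↥(LinearMap.range (q : X →ₗ[ℝ] X)) ⧸ (S.map (q : X →ₗ[ℝ] X)).comap (LinearMap.range (q : X →ₗ[ℝ] X)).subtype)

theorem fredholm_projection_graph_decomposition
    {X : Type*} [NormedAddCommGroup X] [NormedSpace ℝ X] [CompleteSpace X]
    (U V : Submodule ℝ X) (hUc : IsClosed (U : Set X)) (hVc : IsClosed (V : Set X))
    (π : X →L[ℝ] X) (hidem : IsIdempotentElem π)
    (hrange : LinearMap.range (π : X →ₗ[ℝ] X) = U) (hker : LinearMap.ker (π : X →ₗ[ℝ] X) = V)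
    (U' : Submodule ℝ X) (hU'c : IsClosed (U' : Set X))
    (hFred : IsFredholmRestriction π U') :
    -- `F := U' ⊓ ker π` is finite dimensional
    FiniteDimensional ℝ ↥(U' ⊓ LinearMap.ker (π : X →ₗ[ℝ] X)) ∧
      ∃ T : X →L[ℝ] X,
        -- `T` maps `π(U')` into `V`
        (∀ x ∈ U'.map (π : X →ₗ[ℝ] X), T x ∈ V) ∧
        -- `U' = {x + Tx : x ∈ π(U')} ⊕ F`
        Disjoint ((U'.map (π : X →ₗ[ℝ] X)).map ((ContinuousLinearMap.id ℝ X + T : X →L[ℝ] X) : X →ₗ[ℝ] X))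
          (U' ⊓ LinearMap.ker (π : X →ₗ[ℝ] X)) ∧
        ((U'.map (π : X →ₗ[ℝ] X)).map ((ContinuousLinearMap.id ℝ X + T : X →L[ℝ] X) : X →ₗ[ℝ] X)) ⊔ (U' ⊓ LinearMap.ker (π : X →ₗ[ℝ] X)) = U' ∧
        -- consequently `U'` is complemented: it is the range of a continuous projection
        ∃ ρ : X →L[ℝ] X, IsIdempotentElem ρ ∧ LinearMap.range (ρ : X →ₗ[ℝ] X) = U' := by
  subst hrange
  subst hker
  obtain ⟨hFfd, hWc, hcodim⟩ := hFred
  haveI : FiniteDimensional ℝ ↥(U' ⊓ LinearMap.ker (π : X →ₗ[ℝ] X)) := hFfd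
  haveI := hcodim
  set W : Submodule ℝ X := U'.map (π : X →ₗ[ℝ] X) with hWdef
  -- pointwise idempotency
  have hπ2 : ∀ x, π (π x) = π x := fun x => by
    have := DFunLike.congr_fun hidem x
    simpa [ContinuousLinearMap.mul_apply] using this
  have hπfixW : ∀ x ∈ W, π x = x := by
    rintro x ⟨u, hu, rfl⟩
    exact hπ2 u
  -- a continuous projection onto `F := U' ⊓ ker π`
  obtain ⟨e, he⟩ :=
    (Submodule.ClosedComplemented.of_finiteDimensional (𝕜 := ℝ) (U' ⊓ LinearMap.ker (π : X →ₗ[ℝ] X)))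
  set eX : X →L[ℝ] X := (U' ⊓ LinearMap.ker (π : X →ₗ[ℝ] X)).subtypeL.comp e with heXdef
  have heXmem : ∀ x, eX x ∈ U' ⊓ LinearMap.ker (π : X →ₗ[ℝ] X) := fun x => (e x).2
  have heXfix : ∀ x ∈ U' ⊓ LinearMap.ker (π : X →ₗ[ℝ] X), eX x = x := fun x hx =>
    congrArg Subtype.val (he ⟨x, hx⟩)
  have hFU' : U' ⊓ LinearMap.ker (π : X →ₗ[ℝ] X) ≤ U' := inf_le_left
  have hFker : U' ⊓ LinearMap.ker (π : X →ₗ[ℝ] X) ≤ LinearMap.ker (π : X →ₗ[ℝ] X) := inf_le_right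
  -- the complement `G` of `F` inside `U'`
  set G : Submodule ℝ X := U' ⊓ LinearMap.ker (eX : X →ₗ[ℝ] X) with hGdef
  have hGU' : G ≤ U' := inf_le_left
  have hGc : IsClosed (G : Set X) := by
    have : (G : Set X) = (U' : Set X) ∩ (LinearMap.ker (eX : X →ₗ[ℝ] X) : Set X) := rfl
    rw [this]
    exact hU'c.inter (ContinuousLinearMap.isClosed_ker eX)
  have hdecomp : ∀ x ∈ U', x - eX x ∈ G ∧ eX x ∈ U' ⊓ LinearMap.ker (π : X →ₗ[ℝ] X) := by
    intro x hx
    refine ⟨⟨sub_mem hx (hFU' (heXmem x)), ?_⟩, heXmem x⟩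
    have h : eX (x - eX x) = eX x - eX (eX x) := map_sub eX x (eX x)
    show eX (x - eX x) = 0
    rw [h, heXfix (eX x) (heXmem x), sub_self]
  -- `S = π ⁻¹ (W)` is closed of finite codimension, hence complemented
  set S : Submodule ℝ X := W.comap (π : X →ₗ[ℝ] X) with hSdef
  have hScl : IsClosed (S : Set X) := hWc.preimage π.continuous
  have hU'S : U' ≤ S := fun x hx => Submodule.mem_comap.2 (Submodule.mem_map_of_mem hx)
  have hWS : W ≤ S := fun x hx => Submodule.mem_comap.2 (by rwa [ContinuousLinearMap.coe_coe, hπfixW x hx])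
  -- finite codimension of `S`
  haveI : FiniteDimensional ℝ (X ⧸ S) := by
    set L : ↥(LinearMap.range (π : X →ₗ[ℝ] X)) →ₗ[ℝ] X ⧸ S :=
      S.mkQ.comp (LinearMap.range (π : X →ₗ[ℝ] X)).subtype with hLdef
    have hL : W.comap (LinearMap.range (π : X →ₗ[ℝ] X)).subtype ≤ LinearMap.ker L := by
      intro u hu
      have : (u : X) ∈ S := hWS (Submodule.mem_comap.1 hu)
      simpa [hLdef, Submodule.Quotient.mk_eq_zero] using this
    have hsurj : Function.Surjective (Submodule.liftQ _ L hL) := by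
      intro y
      obtain ⟨x, rfl⟩ := Submodule.mkQ_surjective S y
      refine ⟨Submodule.Quotient.mk ⟨π x, ⟨x, rfl⟩⟩, ?_⟩
      have hxS : π x - x ∈ S := by
        refine Submodule.mem_comap.2 ?_
        have : π (π x - x) = 0 := by rw [map_sub, hπ2, sub_self]
        rw [ContinuousLinearMap.coe_coe, this]; exact W.zero_mem
      have : S.mkQ (π x) = S.mkQ x := by
        rw [Submodule.mkQ_apply, Submodule.mkQ_apply, Submodule.Quotient.eq]
        exact hxS
      simpa [hLdef] using this
    exact Module.Finite.of_surjective _ hsurj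
  obtain ⟨pS, hpS⟩ :=
    Submodule.ClosedComplemented.of_quotient_finiteDimensional (p := S) hScl
  -- the projection `pW : X → W`, `pW = π` on `S`
  set πS : ↥S →L[ℝ] ↥W := (π.comp S.subtypeL).codRestrict W (fun s => s.2) with hπSdef
  set pW : X →L[ℝ] ↥W := πS.comp pS with hpWdef
  have hpWc : ∀ x ∈ S, ((pW x : X)) = π x := by
    intro x hx
    have h1 : pS x = ⟨x, hx⟩ := hpS ⟨x, hx⟩
    simp [hpWdef, hπSdef, h1]; rfl
  -- `π` restricted to `G`, as a map to `W`, is a continuous bijection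
  set φ : ↥G →L[ℝ] ↥W :=
    (π.comp G.subtypeL).codRestrict W
      (fun g => Submodule.mem_map_of_mem (hGU' g.2)) with hφdef
  have hφc : ∀ g : ↥G, ((φ g : X)) = π g := fun g => rfl
  haveI := hGc.completeSpace_coe
  haveI := hWc.completeSpace_coe
  have hφinj : LinearMap.ker (φ : ↥G →ₗ[ℝ] ↥W) = ⊥ := by
    rw [LinearMap.ker_eq_bot']
    intro g hg
    have hπg : π (g : X) = 0 := by
      have := congrArg Subtype.val hg
      simpa [hφc] using this
    have hgF : (g : X) ∈ U' ⊓ LinearMap.ker (π : X →ₗ[ℝ] X) := ⟨hGU' g.2, hπg⟩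
    have h0 : eX (g : X) = 0 := g.2.2
    have : (g : X) = 0 := by rw [← heXfix _ hgF, h0]
    exact Subtype.ext this
  have hφsurj : LinearMap.range (φ : ↥G →ₗ[ℝ] ↥W) = ⊤ := by
    rw [LinearMap.range_eq_top]
    rintro ⟨w, hw⟩
    obtain ⟨u, hu, rfl⟩ := hw
    obtain ⟨hgG, hFmem⟩ := hdecomp u hu
    refine ⟨⟨u - eX u, hgG⟩, ?_⟩
    apply Subtype.ext
    have : π (u - eX u) = π u - π (eX u) := map_sub π u (eX u)
    have h0 : π (eX u) = 0 := hFker (heXmem u)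
    simp [hφc, this, h0]
  set Φ := ContinuousLinearEquiv.ofBijective φ hφinj hφsurj with hΦdef
  set σ : ↥W ≃L[ℝ] ↥G := Φ.symm with hσdef
  have hσ_eq : ∀ (w : ↥W) (g : ↥G), σ w = g ↔ (w : X) = π g := by
    intro w g
    rw [hσdef, ContinuousLinearEquiv.symm_apply_eq]
    have hΦg : Φ g = φ g := rfl
    rw [hΦg]
    exact ⟨fun h => by rw [h]; exact (hφc g).symm,
      fun h => Subtype.ext (by rw [hφc]; exact h)⟩
  -- the operator `T`
  set σX : ↥W →L[ℝ] X := G.subtypeL.comp (σ : ↥W →L[ℝ] ↥G) with hσXdef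
  set T : X →L[ℝ] X := σX.comp pW - W.subtypeL.comp pW with hTdef
  have hT : ∀ x, T x = ((σ (pW x) : ↥G) : X) - ((pW x : X)) := fun x => rfl
  -- the projection onto `G`
  set ρG : X →L[ℝ] X := σX.comp pW with hρGdef
  have hρG : ∀ x, ρG x = ((σ (pW x) : ↥G) : X) := fun x => rfl
  have hρGmem : ∀ x, ρG x ∈ G := fun x => (σ (pW x)).2
  have hρGU' : ∀ x ∈ U', ρG x = x - eX x := by
    intro x hx
    obtain ⟨hgG, hFmem⟩ := hdecomp x hx
    have h1 : ((pW x : X)) = π x := hpWc x (hU'S hx)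
    have h2 : σ (pW x) = ⟨x - eX x, hgG⟩ := by
      rw [hσ_eq]
      have : π (x - eX x) = π x - π (eX x) := map_sub π x (eX x)
      rw [h1, this, (show π (eX x) = 0 from hFker (heXmem x)), sub_zero]
    rw [hρG, h2]
  -- the graph of `T` over `W` is exactly `G`
  have hgraph : W.map ((ContinuousLinearMap.id ℝ X + T : X →L[ℝ] X) : X →ₗ[ℝ] X) = G := by
    ext x
    simp only [Submodule.mem_map]
    constructor
    · rintro ⟨y, hy, rfl⟩
      have h1 : ((pW y : X)) = y := by rw [hpWc y (hWS hy)]; exact hπfixW y hy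
      have : (ContinuousLinearMap.id ℝ X + T) y = ((σ (pW y) : ↥G) : X) := by
        simp only [ContinuousLinearMap.add_apply, ContinuousLinearMap.id_apply, hT, h1]
        abel
      rw [ContinuousLinearMap.coe_coe, this]
      exact (σ (pW y)).2
    · intro hxG
      have hπxW : π x ∈ W := Submodule.mem_map_of_mem (hGU' hxG)
      refine ⟨π x, hπxW, ?_⟩
      have h1 : ((pW (π x) : X)) = π x := by
        rw [hpWc (π x) (hWS hπxW)]; exact hπfixW _ hπxW
      have h2 : σ (pW (π x)) = ⟨x, hxG⟩ := by rw [hσ_eq]; rw [h1]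
      simp only [ContinuousLinearMap.coe_coe, ContinuousLinearMap.add_apply, ContinuousLinearMap.id_apply, hT, h1, h2]
      abel
  refine ⟨hFfd, T, ?_, ?_, ?_, ?_⟩
  · -- `T` maps `W` into `ker π`
    intro x hx
    rw [LinearMap.mem_ker, hT]
    have h1 : ((pW x : X)) = x := by rw [hpWc x (hWS hx)]; exact hπfixW x hx
    have h2 : π ((σ (pW x) : ↥G) : X) = ((pW x : X)) := by
      have := (hσ_eq (pW x) (σ (pW x))).mp rfl
      exact this.symm
    rw [map_sub, ContinuousLinearMap.coe_coe, h2, h1, hπfixW x hx, sub_self]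
  · -- disjointness
    rw [hgraph]
    rw [Submodule.disjoint_def]
    intro x hxG hxF
    have h0 : eX x = 0 := hxG.2
    rw [← heXfix x hxF, h0]
  · -- sup equals `U'`
    rw [hgraph]
    apply le_antisymm
    · exact sup_le hGU' hFU'
    · intro x hx
      exact Submodule.mem_sup.2
        ⟨x - eX x, (hdecomp x hx).1, eX x, (hdecomp x hx).2, sub_add_cancel x (eX x)⟩
  · -- the continuous projection onto `U'`
    set ρ : X →L[ℝ] X := ρG + eX - eX.comp ρG with hρdef
    have hρapp : ∀ x, ρ x = ρG x + eX x - eX (ρG x) := fun x => rfl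
    have hρmem : ∀ x, ρ x ∈ U' := by
      intro x
      rw [hρapp]
      exact sub_mem (add_mem (hGU' (hρGmem x)) (hFU' (heXmem x))) (hFU' (heXmem _))
    have hρfix : ∀ x ∈ U', ρ x = x := by
      intro x hx
      rw [hρapp, hρGU' x hx]
      have h1 : eX (x - eX x) = 0 := by
        rw [map_sub, heXfix (eX x) (heXmem x), sub_self]
      rw [h1, sub_zero, sub_add_cancel x (eX x)]
    refine ⟨ρ, ?_, ?_⟩
    · apply ContinuousLinearMap.ext
      intro x
      have : (ρ * ρ) x = ρ (ρ x) := rfl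
      rw [this, hρfix (ρ x) (hρmem x)]
    · apply le_antisymm
      · rintro x ⟨y, rfl⟩
        exact hρmem y
      · intro x hx
        exact ⟨x, hρfix x hx⟩
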